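/- Let z > 0 be real, k ≥ 1 and N ≥ 0 be integers, and ε be a complex number with ε + j ≠ 0 for every integer j ≥ 1; set ν = N + ε. Then the k-th derivative of ν ↦ J_ν(z) at ν equals k!·(z/2)^ν · ∑_{m=0}^∞ [(−z²/4)^m/m!] · ∑_{k₁=0}^{k} ([log(z/2)]^{k₁}/k₁!) · ∑_{k₂=0}^{k−k₁} [G^{(k₂)}(1+ε)/k₂!] · Q_{m+N}^{(k−k₁−k₂)}(1+ε). -/

import Mathlib

open scoped BigOperators

/-- The reciprocal of the complex Gamma function, an entire function
(Mathlib's `Complex.Gamma` vanishes at nonpositive integers, so the inverse is `0` there). -/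
noncomputable def Grec (t : ℂ) : ℂ := (Complex.Gamma t)⁻¹

/-- `G k t` is the `k`-th derivative of the reciprocal Gamma function at `t`. -/
noncomputable def G (k : ℕ) (t : ℂ) : ℂ := iteratedDeriv k Grec t

/-- The Maclaurin coefficients of `1/Γ`: `c j = G^{(j)}(0)/j!`. -/
noncomputable def mcCoeff (j : ℕ) : ℂ := iteratedDeriv j Grec 0 / (j.factorial : ℂ)

/-- Bessel function of the first kind `J_ν(z)` for real `z > 0` and complex order `ν`,
with `(z/2)^ν = exp (ν log (z/2))`. -/
noncomputable def besselJ (z : ℝ) (ν : ℂ) : ℂ :=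
  Complex.exp (ν * Complex.log ((z : ℂ) / 2)) *
    ∑' m : ℕ, (-(z : ℂ) ^ 2 / 4) ^ m / ((m.factorial : ℂ) * Complex.Gamma (ν + 1 + m))

/-- Pochhammer symbol `(t)_m = t (t+1) ⋯ (t+m-1)`. -/
noncomputable def poch (t : ℂ) (m : ℕ) : ℂ := ∏ i ∈ Finset.range m, (t + i)

/-- `P m k t = (1/k!) dᵏ/dtᵏ (t)_m`. -/
noncomputable def P (m k : ℕ) (t : ℂ) : ℂ :=
  ((k.factorial : ℂ))⁻¹ * iteratedDeriv k (fun s => poch s m) t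

/-- `Q m k t = (1/k!) dᵏ/dtᵏ (1/(t)_m)`. -/
noncomputable def Q (m k : ℕ) (t : ℂ) : ℂ :=
  ((k.factorial : ℂ))⁻¹ * iteratedDeriv k (fun s => (poch s m)⁻¹) t

/-- Signed Stirling numbers of the first kind: `s(n,k)` is the coefficient of `x^k`
in `x(x-1)⋯(x-n+1)`. -/
noncomputable def stirS (n k : ℕ) : ℤ := (descPochhammer ℤ n).coeff k

/-- Modified generalized harmonic numbers `Ĥ_m^{(k)}`. -/
noncomputable def Hhat (m k : ℕ) : ℝ :=
  if m = 0 then (if k = 0 then 1 else 0)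
  else ∑ j ∈ Finset.Icc 1 m, (-1 : ℝ) ^ (j - 1) * (m.choose j) / (j : ℝ) ^ k

/-- Digamma function `ψ = Γ'/Γ`. -/
noncomputable def digamma (t : ℂ) : ℂ := deriv Complex.Gamma t / Complex.Gamma t

open Finset in
lemma choose_shuffle (F G : ℕ → ℂ) (n : ℕ) :
    ∑ i ∈ range (n+1), (n.choose i : ℂ) * (F (i+1) * G (n-i) + F i * G (n-i+1)) =
      ∑ i ∈ range (n+2), ((n+1).choose i : ℂ) * F i * G (n+1-i) := by
  rw [Finset.sum_range_succ' (fun i => ((n+1).choose i : ℂ) * F i * G (n+1-i)) (n+1)]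
  have h1 : ∀ i ∈ range (n+1),
      ((n+1).choose (i+1) : ℂ) * F (i+1) * G (n+1-(i+1)) =
        (n.choose i : ℂ) * F (i+1) * G (n-i) + (n.choose (i+1) : ℂ) * F (i+1) * G (n-i) := by
    intro i _
    have : n+1-(i+1) = n - i := by omega
    rw [this, Nat.choose_succ_succ]
    push_cast; ring
  rw [Finset.sum_congr rfl h1, Finset.sum_add_distrib]
  have h2 : ∑ i ∈ range (n+1), (n.choose i : ℂ) * (F (i+1) * G (n-i) + F i * G (n-i+1)) =
      (∑ i ∈ range (n+1), (n.choose i : ℂ) * F (i+1) * G (n-i))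
        + ∑ i ∈ range (n+1), (n.choose i : ℂ) * F i * G (n-i+1) := by
    rw [← Finset.sum_add_distrib]; apply Finset.sum_congr rfl; intro i _; ring
  rw [h2]
  have h3 : ∑ i ∈ range (n+1), (n.choose i : ℂ) * F i * G (n-i+1) =
      (∑ i ∈ range n, (n.choose (i+1) : ℂ) * F (i+1) * G (n-i)) + F 0 * G (n+1) := by
    rw [Finset.sum_range_succ' (fun i => (n.choose i : ℂ) * F i * G (n-i+1)) n]
    congr 1
    · apply Finset.sum_congr rfl; intro i hi
      have : n - (i+1) + 1 = n - i := by simp at hi; omega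
      rw [this]
    · simp
  have h4 : ∑ i ∈ range (n+1), (n.choose (i+1) : ℂ) * F (i+1) * G (n-i) =
      ∑ i ∈ range n, (n.choose (i+1) : ℂ) * F (i+1) * G (n-i) := by
    rw [Finset.sum_range_succ]; simp
  rw [h3, h4]
  simp [Nat.choose]
  ring

open Metric in
lemma hasSum_iteratedDeriv_of_bounds (k : ℕ) :
    ∀ (F : ℕ → ℂ → ℂ), (∀ i, Differentiable ℂ (F i)) →
    (∀ R : ℝ, 0 < R → ∃ u : ℕ → ℝ, Summable u ∧
      ∀ (i : ℕ) (w : ℂ), w ∈ closedBall (0:ℂ) R → ‖F i w‖ ≤ u i) →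
    ∀ z : ℂ, HasSum (fun i => iteratedDeriv k (F i) z)
      (iteratedDeriv k (fun w => ∑' i, F i w) z) := by
  induction k with
  | zero =>
    intro F hF hb z
    simp only [iteratedDeriv_zero]
    obtain ⟨u, hu, hle⟩ := hb (‖z‖ + 1) (by positivity)
    refine (Summable.of_norm_bounded hu fun i => hle i z ?_).hasSum
    simp only [Metric.mem_closedBall, dist_zero_right]
    linarith [norm_nonneg z]
  | succ k IH =>
    intro F hF hb z
    simp only [iteratedDeriv_succ']
    -- derivative of the sum equals sum of derivatives, pointwise everywhere
    have hderiv : ∀ w : ℂ, deriv (fun y => ∑' i, F i y) w = ∑' i, deriv (F i) w := by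
      intro w
      obtain ⟨u, hu, hle⟩ := hb (‖w‖ + 1) (by positivity)
      have := Complex.hasSum_deriv_of_summable_norm (U := ball (0:ℂ) (‖w‖+1)) hu
        (fun i => (hF i).differentiableOn) isOpen_ball
        (fun i x hx => hle i x (ball_subset_closedBall hx))
        (by simp; linarith [norm_nonneg w])
      exact this.tsum_eq.symm
    have hfun : (deriv fun w => ∑' i, F i w) = fun w => ∑' i, deriv (F i) w :=
      funext hderiv
    rw [hfun]
    apply IH
    · intro i x
      exact (((Complex.analyticOnNhd_univ_iff_differentiable.2 (hF i)).deriv) x trivial).differentiableAt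
    · intro R hR
      obtain ⟨u, hu, hle⟩ := hb (R + 1) (by positivity)
      refine ⟨u, hu, fun i w hw => ?_⟩
      have h1 : closedBall w 1 ⊆ (Set.univ : Set ℂ) := Set.subset_univ _
      rw [← Complex.cderiv_eq_deriv isOpen_univ (hF i).differentiableOn one_pos h1]
      have := Complex.norm_cderiv_le (f := F i) (z := w) one_pos
        (M := u i) (fun x hx => hle i x ?_)
      · simpa using this
      · simp only [mem_sphere_iff_norm] at hx
        simp only [mem_closedBall, dist_zero_right] at hw ⊢
        calc ‖x‖ = ‖w + (x - w)‖ := by ring_nf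
          _ ≤ ‖w‖ + ‖x - w‖ := norm_add_le _ _
          _ ≤ R + 1 := by rw [hx]; linarith

lemma poch_succ (s : ℂ) (n : ℕ) : poch s (n+1) = poch s n * (s + n) := by
  simp [poch, Finset.prod_range_succ]

lemma Gamma_add_nat (s : ℂ) (n : ℕ) (h : ∀ i < n, s + (i : ℂ) ≠ 0) :
    Complex.Gamma (s + n) = Complex.Gamma s * poch s n := by
  induction n with
  | zero => simp [poch]
  | succ n IH =>
    have h' : ∀ i < n, s + (i : ℂ) ≠ 0 := fun i hi => h i (by omega)
    have hn : s + (n : ℂ) ≠ 0 := h n (by omega)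
    rw [show s + ((n+1 : ℕ) : ℂ) = (s + n) + 1 by push_cast; ring,
      Complex.Gamma_add_one _ hn, IH h', poch_succ]
    ring

lemma Grec_add_nat (s : ℂ) (n : ℕ) (h : ∀ i < n, s + (i : ℂ) ≠ 0) :
    Grec (s + n) = Grec s * (poch s n)⁻¹ := by
  rw [Grec, Grec, Gamma_add_nat s n h, mul_inv]

lemma differentiable_Grec : Differentiable ℂ Grec := Complex.differentiable_one_div_Gamma

lemma norm_factor_ge {R : ℝ} {ν : ℂ} (hν : ‖ν‖ ≤ R) (M : ℕ) (hRM : R ≤ M) (i : ℕ) :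
    (i : ℝ) + 1 ≤ ‖ν + 1 + M + i‖ := by
  have hc : ((1 : ℂ) + M + i) = ((1 + M + i : ℝ) : ℂ) := by push_cast; ring
  have h1 : ‖(1:ℂ) + M + i‖ = 1 + M + i := by
    rw [hc, Complex.norm_real, Real.norm_of_nonneg (by positivity)]
  have h2 : ‖(1:ℂ) + M + i‖ - ‖ν‖ ≤ ‖ν + (1 + M + i)‖ := by
    calc ‖(1:ℂ) + M + i‖ - ‖ν‖ = ‖(1:ℂ) + M + i‖ - ‖-ν‖ := by rw [norm_neg]
      _ ≤ ‖(1 + M + i) - (-ν)‖ := norm_sub_norm_le _ _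
      _ = ‖ν + (1 + M + i)‖ := by ring_nf
  have : ν + 1 + M + i = ν + (1 + M + i) := by ring
  rw [this]
  rw [h1] at h2
  linarith

lemma Grec_bound (R : ℝ) (hR : 0 < R) : ∃ C : ℝ, 0 ≤ C ∧ ∀ (m : ℕ) (ν : ℂ),
    ν ∈ Metric.closedBall (0:ℂ) R → ‖Grec (ν + 1 + m)‖ ≤ C := by
  set M : ℕ := ⌈R⌉₊ with hM
  have hRM : R ≤ M := Nat.le_ceil R
  obtain ⟨C, hC⟩ := (isCompact_closedBall (0:ℂ) (R + M + 1)).exists_bound_of_continuousOn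
    (differentiable_Grec.continuous.continuousOn (s := Metric.closedBall 0 (R + M + 1)))
  refine ⟨max C 0, le_max_right _ _, fun m ν hν => ?_⟩
  simp only [Metric.mem_closedBall, dist_zero_right] at hν
  have hball : ∀ j : ℕ, j ≤ M → ‖Grec (ν + 1 + j)‖ ≤ max C 0 := by
    intro j hj
    refine le_trans (hC _ ?_) (le_max_left _ _)
    simp only [Metric.mem_closedBall, dist_zero_right]
    calc ‖ν + 1 + j‖ ≤ ‖ν‖ + ‖(1:ℂ)‖ + ‖(j:ℂ)‖ :=
          le_trans (norm_add_le _ _) (by gcongr; exact norm_add_le _ _)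
      _ ≤ R + M + 1 := by
          simp only [norm_one, Complex.norm_natCast]
          have : (j:ℝ) ≤ M := by exact_mod_cast hj
          linarith
  rcases le_or_gt m M with hm | hm
  · exact hball m hm
  · have hfac : ∀ i : ℕ, ν + 1 + M + i ≠ 0 := by
      intro i h0
      have h1 := norm_factor_ge hν M hRM i
      rw [h0, norm_zero] at h1
      have h2 : (0:ℝ) ≤ (i:ℝ) := Nat.cast_nonneg i
      linarith
    have key : Grec (ν + 1 + m) = Grec (ν + 1 + M) * (poch (ν + 1 + M) (m - M))⁻¹ := by
      have h := Grec_add_nat (ν + 1 + M) (m - M) (fun i _ => hfac i)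
      rw [← h]
      congr 1
      have : ((m - M : ℕ) : ℂ) = (m : ℂ) - M := by
        push_cast [Nat.cast_sub hm.le]; ring
      rw [this]; ring
    have hpoch : 1 ≤ ‖poch (ν + 1 + M) (m - M)‖ := by
      rw [poch, norm_prod]
      calc (1:ℝ) = ∏ _i ∈ Finset.range (m - M), (1:ℝ) := by simp
        _ ≤ ∏ i ∈ Finset.range (m - M), ‖ν + 1 + (M:ℂ) + (i:ℂ)‖ := by
            refine Finset.prod_le_prod (fun i _ => by norm_num) (fun i _ => ?_)
            have h1 := norm_factor_ge hν M hRM i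
            have h0 : (0:ℝ) ≤ (i:ℝ) := Nat.cast_nonneg i
            linarith
    rw [key, norm_mul, norm_inv]
    calc ‖Grec (ν + 1 + M)‖ * ‖poch (ν + 1 + M) (m-M)‖⁻¹
        ≤ max C 0 * 1 := by
          apply mul_le_mul (hball M le_rfl) _ (by positivity) (le_max_right _ _)
          exact inv_le_one_of_one_le₀ hpoch
      _ = max C 0 := mul_one _

-- Leibniz formula for iteratedDeriv on an open subset of ℂ
open Finset in
lemma analyticOnNhd_iteratedDeriv {f : ℂ → ℂ} {U : Set ℂ} (hf : AnalyticOnNhd ℂ f U) :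
    ∀ n, AnalyticOnNhd ℂ (iteratedDeriv n f) U := by
  intro n; induction n with
  | zero => simpa [iteratedDeriv_zero] using hf
  | succ n IH => rw [iteratedDeriv_succ]; exact IH.deriv

open Finset in
lemma iteratedDeriv_mul_of_analytic {f g : ℂ → ℂ} {U : Set ℂ} (hU : IsOpen U)
    (hf : AnalyticOnNhd ℂ f U) (hg : AnalyticOnNhd ℂ g U) (n : ℕ) {x : ℂ} (hx : x ∈ U) :
    iteratedDeriv n (fun y => f y * g y) x =
      ∑ i ∈ range (n + 1), (n.choose i : ℂ) * iteratedDeriv i f x * iteratedDeriv (n - i) g x := by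
  induction n generalizing x with
  | zero => simp
  | succ n IH =>
    have hev : (iteratedDeriv n fun y => f y * g y) =ᶠ[nhds x]
        (fun y => ∑ i ∈ range (n + 1), (n.choose i : ℂ) * iteratedDeriv i f y * iteratedDeriv (n - i) g y) := by
      filter_upwards [hU.mem_nhds hx] with y hy using IH hy
    rw [iteratedDeriv_succ, hev.deriv_eq]
    have hdf : ∀ i (y : ℂ), y ∈ U → DifferentiableAt ℂ (iteratedDeriv i f) y :=
      fun i y hy => ((analyticOnNhd_iteratedDeriv hf i) y hy).differentiableAt
    have hdg : ∀ i (y : ℂ), y ∈ U → DifferentiableAt ℂ (iteratedDeriv i g) y :=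
      fun i y hy => ((analyticOnNhd_iteratedDeriv hg i) y hy).differentiableAt
    rw [deriv_fun_sum (fun i _ => by
      exact (((hdf i x hx).const_mul _).mul (hdg (n - i) x hx)))]
    have step : ∀ i ∈ range (n + 1),
        deriv (fun y => (n.choose i : ℂ) * iteratedDeriv i f y * iteratedDeriv (n - i) g y) x =
          (n.choose i : ℂ) * (iteratedDeriv (i+1) f x * iteratedDeriv (n - i) g x
            + iteratedDeriv i f x * iteratedDeriv (n - i + 1) g x) := by
      intro i _
      rw [show (fun y => (n.choose i : ℂ) * iteratedDeriv i f y * iteratedDeriv (n - i) g y)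
          = fun y => (n.choose i : ℂ) * (iteratedDeriv i f y * iteratedDeriv (n - i) g y) by
            funext y; ring]
      rw [deriv_const_mul (d := fun y => iteratedDeriv i f y * iteratedDeriv (n - i) g y) _ ((hdf i x hx).mul (hdg (n-i) x hx)),
        deriv_fun_mul (hdf i x hx) (hdg (n-i) x hx), ← iteratedDeriv_succ, ← iteratedDeriv_succ]
    rw [Finset.sum_congr rfl step]
    exact choose_shuffle (fun i => iteratedDeriv i f x) (fun i => iteratedDeriv i g x) n

lemma differentiable_poch (n : ℕ) : Differentiable ℂ (fun s => poch s n) := by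
  induction n with
  | zero => simpa [poch] using differentiable_const 1
  | succ n IH =>
    simp only [poch_succ]
    exact IH.mul (differentiable_id.add_const _)

open Finset in
lemma key_term (L : ℂ) (N : ℕ) (ε : ℂ) (hε : ∀ j : ℕ, 1 ≤ j → ε + (j : ℂ) ≠ 0) (k m : ℕ) :
    iteratedDeriv k (fun ν => Complex.exp (ν * L) * Grec (ν + 1 + m)) ((N : ℂ) + ε) =
      (k.factorial : ℂ) * Complex.exp (((N : ℂ) + ε) * L) *
        ∑ k1 ∈ range (k + 1), L ^ k1 / (k1.factorial : ℂ) *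
          ∑ k2 ∈ range (k - k1 + 1),
            G k2 (1 + ε) / (k2.factorial : ℂ) * Q (m + N) (k - k1 - k2) (1 + ε) := by
  classical
  set ν₀ : ℂ := (N : ℂ) + ε with hν₀
  set n : ℕ := m + N with hn
  -- the open set where the pochhammer factor is invertible
  set U : Set ℂ := {ν | poch (ν - N + 1) n ≠ 0} with hU
  have hUopen : IsOpen U := by
    have : U = (fun ν : ℂ => poch (ν - N + 1) n) ⁻¹' {(0:ℂ)}ᶜ := rfl
    rw [this]
    exact isOpen_compl_singleton.preimage ((differentiable_poch n).comp
      ((differentiable_id.sub_const _).add_const _)).continuous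
  have hfac₀ : ∀ i : ℕ, (ν₀ - N + 1) + (i : ℂ) ≠ 0 := by
    intro i
    have : (ν₀ - N + 1) + (i : ℂ) = ε + ((i + 1 : ℕ) : ℂ) := by push_cast [hν₀]; ring
    rw [this]; exact hε (i+1) (by omega)
  have hν₀U : ν₀ ∈ U := by
    simp only [hU, Set.mem_setOf_eq, poch]
    rw [Finset.prod_ne_zero_iff]
    exact fun i _ => hfac₀ i
  -- B and C factors
  set B : ℂ → ℂ := fun ν => Grec (ν - N + 1) with hB
  set Cf : ℂ → ℂ := fun ν => (poch (ν - N + 1) n)⁻¹ with hCf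
  -- local identity
  have hloc : ∀ ν ∈ U, Complex.exp (ν * L) * Grec (ν + 1 + m) =
      Complex.exp (ν * L) * (B ν * Cf ν) := by
    intro ν hνU
    have hne : ∀ i < n, (ν - N + 1) + (i : ℂ) ≠ 0 := by
      intro i hi
      simp only [hU, Set.mem_setOf_eq, poch, Finset.prod_ne_zero_iff] at hνU
      exact hνU i (Finset.mem_range.mpr hi)
    have := Grec_add_nat (ν - N + 1) n hne
    have harg : (ν - N + 1) + (n : ℂ) = ν + 1 + m := by push_cast [hn]; ring
    rw [harg] at this
    rw [this]
  have hev : (fun ν => Complex.exp (ν * L) * Grec (ν + 1 + m)) =ᶠ[nhds ν₀]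
      (fun ν => Complex.exp (ν * L) * (B ν * Cf ν)) := by
    filter_upwards [hUopen.mem_nhds hν₀U] with ν hν using hloc ν hν
  rw [hev.iteratedDeriv_eq k]
  -- analyticity
  have hA : AnalyticOnNhd ℂ (fun ν => Complex.exp (ν * L)) U := fun x _ =>
    ((Complex.differentiable_exp.comp (differentiable_id.mul_const L)).analyticAt x)
  have hBa : AnalyticOnNhd ℂ B U := fun x _ =>
    ((differentiable_Grec.comp ((differentiable_id.sub_const _).add_const _)).analyticAt x)
  have hCa : AnalyticOnNhd ℂ Cf U := by
    refine DifferentiableOn.analyticOnNhd (fun x hx => ?_) hUopen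
    exact (DifferentiableAt.inv (((differentiable_poch n).comp
      ((differentiable_id.sub_const _).add_const _)) x) hx).differentiableWithinAt
  have hBCa : AnalyticOnNhd ℂ (fun ν => B ν * Cf ν) U := hBa.mul hCa
  rw [iteratedDeriv_mul_of_analytic hUopen hA hBCa k hν₀U]
  -- derivatives of the exponential factor
  have hAk : ∀ k1 : ℕ, iteratedDeriv k1 (fun ν => Complex.exp (ν * L)) ν₀ =
      L ^ k1 * Complex.exp (ν₀ * L) := by
    intro k1
    have : (fun ν : ℂ => Complex.exp (ν * L)) = fun ν => Complex.exp (L * ν) := by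
      funext ν; rw [mul_comm]
    rw [this, iteratedDeriv_cexp_const_mul k1 L]
    simp [mul_comm]
  -- derivatives of B
  have hBk : ∀ k2 : ℕ, iteratedDeriv k2 B ν₀ = G k2 (1 + ε) := by
    intro k2
    have hBeq : B = fun ν => Grec (ν + (1 - (N:ℂ))) := by funext ν; rw [hB]; ring_nf
    rw [hBeq, iteratedDeriv_comp_add_const k2 Grec (1 - (N:ℂ))]
    show iteratedDeriv k2 Grec (ν₀ + (1 - (N:ℂ))) = G k2 (1 + ε)
    have : ν₀ + (1 - (N:ℂ)) = 1 + ε := by rw [hν₀]; ring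
    rw [this, G]
  -- derivatives of Cf
  have hCk : ∀ k3 : ℕ, iteratedDeriv k3 Cf ν₀ =
      (k3.factorial : ℂ) * Q n k3 (1 + ε) := by
    intro k3
    have hCeq : Cf = fun ν => (fun s => (poch s n)⁻¹) (ν + (1 - (N:ℂ))) := by
      funext ν; rw [hCf]; ring_nf
    rw [hCeq, iteratedDeriv_comp_add_const k3 (fun s => (poch s n)⁻¹) (1 - (N:ℂ))]
    show iteratedDeriv k3 (fun s => (poch s n)⁻¹) (ν₀ + (1 - (N:ℂ))) = _
    have : ν₀ + (1 - (N:ℂ)) = 1 + ε := by rw [hν₀]; ring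
    rw [this, Q, ← mul_assoc, mul_inv_cancel₀ (by exact_mod_cast (Nat.factorial_ne_zero k3)), one_mul]
  -- expand inner Leibniz
  have hinner : ∀ k1 ∈ range (k+1), iteratedDeriv (k - k1) (fun ν => B ν * Cf ν) ν₀ =
      ∑ k2 ∈ range (k - k1 + 1), ((k - k1).choose k2 : ℂ) * G k2 (1 + ε) *
        (((k - k1 - k2).factorial : ℂ) * Q n (k - k1 - k2) (1 + ε)) := by
    intro k1 _
    rw [iteratedDeriv_mul_of_analytic hUopen hBa hCa (k - k1) hν₀U]
    exact Finset.sum_congr rfl fun k2 _ => by rw [hBk, hCk]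
  rw [Finset.sum_congr rfl (fun k1 hk1 => by rw [hinner k1 hk1, hAk])]
  -- now pure algebra with factorials
  rw [Finset.mul_sum]
  refine Finset.sum_congr rfl fun k1 hk1 => ?_
  rw [Finset.mul_sum, Finset.mul_sum, Finset.mul_sum]
  refine Finset.sum_congr rfl fun k2 hk2 => ?_
  have hk1' : k1 ≤ k := by simpa using Nat.lt_succ_iff.mp (Finset.mem_range.mp hk1)
  have hk2' : k2 ≤ k - k1 := by simpa using Nat.lt_succ_iff.mp (Finset.mem_range.mp hk2)
  have hnat : (k.choose k1) * k1.factorial * (k - k1).factorial = k.factorial :=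
    Nat.choose_mul_factorial_mul_factorial hk1'
  have hnat2 : ((k - k1).choose k2) * k2.factorial * (k - k1 - k2).factorial = (k - k1).factorial :=
    Nat.choose_mul_factorial_mul_factorial hk2'
  have h1 : ((k.choose k1 : ℂ)) * (k1.factorial : ℂ) * ((k - k1).factorial : ℂ) = (k.factorial : ℂ) := by
    exact_mod_cast congrArg (Nat.cast : ℕ → ℂ) hnat
  have h2 : (((k - k1).choose k2 : ℂ)) * (k2.factorial : ℂ) * ((k - k1 - k2).factorial : ℂ)
      = ((k - k1).factorial : ℂ) := by
    exact_mod_cast congrArg (Nat.cast : ℕ → ℂ) hnat2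
  have hf1 : (k1.factorial : ℂ) ≠ 0 := by exact_mod_cast Nat.factorial_ne_zero k1
  have hf2 : (k2.factorial : ℂ) ≠ 0 := by exact_mod_cast Nat.factorial_ne_zero k2
  have hf3 : ((k - k1).factorial : ℂ) ≠ 0 := by exact_mod_cast Nat.factorial_ne_zero (k - k1)
  have hnat3 : k.choose k1 * ((k-k1).choose k2) * (k-k1-k2).factorial * k1.factorial * k2.factorial
      = k.factorial := by rw [← hnat, ← hnat2]; ring
  have hcast := congrArg (Nat.cast : ℕ → ℂ) hnat3
  push_cast at hcast
  have hcoef : (k.choose k1 : ℂ) * ((k-k1).choose k2 : ℂ) * ((k-k1-k2).factorial : ℂ)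
      = (k.factorial : ℂ) / (k1.factorial : ℂ) / (k2.factorial : ℂ) := by
    rw [div_div, eq_div_iff (mul_ne_zero hf1 hf2)]
    linear_combination hcast
  linear_combination (Complex.exp (ν₀*L) * L^k1 * G k2 (1+ε) * Q n (k-k1-k2) (1+ε)) * hcoef



lemma iteratedDeriv_cmul {f : ℂ → ℂ} (hf : Differentiable ℂ f) (c : ℂ) (n : ℕ) :
    iteratedDeriv n (fun x => c * f x) = fun x => c * iteratedDeriv n f x := by
  induction n generalizing f with
  | zero => simp
  | succ n IH =>
    rw [iteratedDeriv_succ', iteratedDeriv_succ']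
    have h1 : deriv (fun x => c * f x) = fun x => c * deriv f x := by
      funext x; exact deriv_const_mul c (hf x)
    have h2 : Differentiable ℂ (deriv f) := fun x =>
      (((Complex.analyticOnNhd_univ_iff_differentiable.2 hf).deriv) x trivial).differentiableAt
    rw [h1, IH h2]

/-- For `z > 0`, `k ≥ 1`, `N ≥ 0`, `ν = N + ε` with `ε + j ≠ 0` for all integers `j ≥ 1`:
`∂ᵏ/∂νᵏ J_ν(z) = k! (z/2)^ν ∑ₘ (−z²/4)ᵐ/m! ∑_{k₁=0}^{k} [log(z/2)]^{k₁}/k₁!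
∑_{k₂=0}^{k−k₁} G^{(k₂)}(1+ε)/k₂! · Q_{m+N}^{(k−k₁−k₂)}(1+ε)`. -/
theorem iteratedDeriv_besselJ_N_nonneg (z : ℝ) (hz : 0 < z) (k : ℕ) (hk : 1 ≤ k)
    (N : ℕ) (ε : ℂ) (hε : ∀ j : ℕ, 1 ≤ j → ε + (j : ℂ) ≠ 0) :
    iteratedDeriv k (fun ν => besselJ z ν) ((N : ℂ) + ε) =
      (k.factorial : ℂ) * Complex.exp (((N : ℂ) + ε) * Complex.log ((z : ℂ) / 2)) *
        ∑' m : ℕ, ((-(z : ℂ) ^ 2 / 4) ^ m / (m.factorial : ℂ) *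
          ∑ k1 ∈ Finset.range (k + 1),
            (Complex.log ((z : ℂ) / 2)) ^ k1 / (k1.factorial : ℂ) *
              ∑ k2 ∈ Finset.range (k - k1 + 1),
                G k2 (1 + ε) / (k2.factorial : ℂ) * Q (m + N) (k - k1 - k2) (1 + ε)) := by
  classical
  set L : ℂ := Complex.log ((z : ℂ) / 2) with hL
  set A : ℂ := -(z : ℂ) ^ 2 / 4 with hA
  set c : ℕ → ℂ := fun m => A ^ m / (m.factorial : ℂ) with hc
  set F : ℕ → ℂ → ℂ := fun m ν => Complex.exp (ν * L) * (c m * Grec (ν + 1 + m)) with hF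
  have hnormA : ‖A‖ = z ^ 2 / 4 := by
    rw [show A = ((-(z ^ 2) / 4 : ℝ) : ℂ) by rw [hA]; push_cast; ring, Complex.norm_real,
      Real.norm_eq_abs, abs_div, abs_neg, abs_of_nonneg (sq_nonneg z)]
    norm_num
  have hFdiff : ∀ m, Differentiable ℂ (F m) := by
    intro m
    exact (Complex.differentiable_exp.comp (differentiable_id.mul_const L)).mul
      ((differentiable_Grec.comp ((differentiable_id.add_const 1).add_const (m : ℂ))).const_mul _)
  have hb : ∀ R : ℝ, 0 < R → ∃ u : ℕ → ℝ, Summable u ∧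
      ∀ (m : ℕ) (ν : ℂ), ν ∈ Metric.closedBall (0:ℂ) R → ‖F m ν‖ ≤ u m := by
    intro R hR
    obtain ⟨C, hC0, hCb⟩ := Grec_bound R hR
    refine ⟨fun m => Real.exp (R * ‖L‖) * ((z ^ 2 / 4) ^ m / (m.factorial : ℝ)) * C,
      ((Real.summable_pow_div_factorial (z ^ 2 / 4)).mul_left _).mul_right _, fun m ν hν => ?_⟩
    have hν' : ‖ν‖ ≤ R := by simpa [Metric.mem_closedBall, dist_zero_right] using hν
    have hexp : ‖Complex.exp (ν * L)‖ ≤ Real.exp (R * ‖L‖) := by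
      rw [Complex.norm_exp]
      apply Real.exp_le_exp.2
      calc (ν * L).re ≤ ‖ν * L‖ := Complex.re_le_norm _
        _ = ‖ν‖ * ‖L‖ := norm_mul _ _
        _ ≤ R * ‖L‖ := by gcongr
    have hcm : ‖c m‖ = (z ^ 2 / 4) ^ m / (m.factorial : ℝ) := by
      rw [hc]
      simp only [norm_div, norm_pow, hnormA, Complex.norm_natCast]
    have hgr : ‖Grec (ν + 1 + m)‖ ≤ C := hCb m ν hν
    calc ‖F m ν‖ = ‖Complex.exp (ν * L)‖ * (‖c m‖ * ‖Grec (ν + 1 + m)‖) := by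
          rw [hF]; simp [norm_mul]
      _ ≤ Real.exp (R * ‖L‖) * (((z ^ 2 / 4) ^ m / (m.factorial : ℝ)) * C) := by
          apply mul_le_mul hexp _ (by positivity) (Real.exp_pos _).le
          rw [hcm]
          exact mul_le_mul_of_nonneg_left hgr (by positivity)
      _ = Real.exp (R * ‖L‖) * ((z ^ 2 / 4) ^ m / (m.factorial : ℝ)) * C := by ring
  have hbes : (fun ν => besselJ z ν) = fun ν => ∑' m, F m ν := by
    funext ν
    rw [besselJ, ← tsum_mul_left]
    refine tsum_congr fun m => ?_
    simp only [hF, hc, hA, hL, Grec]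
    rw [div_mul_eq_div_div]
    ring
  rw [hbes, ← (hasSum_iteratedDeriv_of_bounds k F hFdiff hb ((N : ℂ) + ε)).tsum_eq,
    ← tsum_mul_left]
  refine tsum_congr fun m => ?_
  have hFm : F m = fun ν => c m * (Complex.exp (ν * L) * Grec (ν + 1 + m)) := by
    funext ν; rw [hF]; ring
  have hcd : Differentiable ℂ (fun ν : ℂ => Complex.exp (ν * L) * Grec (ν + 1 + m)) :=
    (Complex.differentiable_exp.comp (differentiable_id.mul_const L)).mul
      (differentiable_Grec.comp ((differentiable_id.add_const 1).add_const (m : ℂ)))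
  rw [hFm, iteratedDeriv_cmul hcd (c m) k]
  show c m * iteratedDeriv k (fun ν => Complex.exp (ν * L) * Grec (ν + 1 + m)) ((N:ℂ)+ε) = _
  rw [key_term L N ε hε k m]
  rw [hc]
  ring
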